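/- Let φ : ℝ → ℝ be continuously differentiable, convex, with φ(v) ≥ 0 for all v ∈ ℝ, and such that the derivative φ' is not constant on ℝ. Then for every α ∈ (0,1), the function D_α(v) = α·φ(v) + (1−α)·φ(−v) has at least one critical point (a point v* with D_α'(v*) = 0), and every critical point of D_α is a global minimum of D_α over ℝ. -/

import Mathlib

/-- For a continuously differentiable, convex, nonnegative loss φ whose
derivative is not constant, every α-combination D_α(v) = α·φ(v) + (1−α)·φ(−v) with
α ∈ (0,1) has a critical point, and every critical point is a global minimum. -/
theorem stmt0 (φ : ℝ → ℝ) (hC1 : ContDiff ℝ 1 φ) (hconv : ConvexOn ℝ Set.univ φ)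
    (hnonneg : ∀ v : ℝ, 0 ≤ φ v)
    (hnotconst : ¬ ∃ c : ℝ, ∀ v : ℝ, deriv φ v = c)
    (α : ℝ) (hα : α ∈ Set.Ioo (0:ℝ) 1) :
    (∃ v : ℝ, deriv (fun v => α * φ v + (1 - α) * φ (-v)) v = 0) ∧
    (∀ vstar : ℝ, deriv (fun v => α * φ v + (1 - α) * φ (-v)) vstar = 0 →
      ∀ v : ℝ, α * φ vstar + (1 - α) * φ (-vstar) ≤ α * φ v + (1 - α) * φ (-v)) := by
  obtain ⟨hα0, hα1⟩ := hα
  have hα1' : (0:ℝ) < 1 - α := by linarith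
  have hdiff : Differentiable ℝ φ := hC1.differentiable one_ne_zero
  have hmono : Monotone (deriv φ) := fun x y hxy =>
    hconv.monotoneOn_deriv (fun x _ => hdiff x) trivial trivial hxy
  set D : ℝ → ℝ := fun v => α * φ v + (1 - α) * φ (-v) with hDdef
  set g : ℝ → ℝ := fun v => α * deriv φ v - (1 - α) * deriv φ (-v) with hgdef
  have hD : ∀ v, HasDerivAt D (g v) v := by
    intro v
    have h1 := (hdiff v).hasDerivAt
    have h2 : HasDerivAt (fun v : ℝ => φ (-v)) (-(deriv φ (-v))) v := by
      have := ((hdiff (-v)).hasDerivAt.comp v (hasDerivAt_neg v))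
      simp only [mul_neg, mul_one] at this
      exact this
    have := (h1.const_mul α).add (h2.const_mul (1 - α))
    have e : g v = α * deriv φ v + (1 - α) * -(deriv φ (-v)) := by simp only [g]; ring
    rw [e]; exact this
  have hDeriv : deriv D = g := funext fun v => (hD v).deriv
  have hgmono : Monotone g := by
    intro x y hxy
    have h1 : α * deriv φ x ≤ α * deriv φ y :=
      mul_le_mul_of_nonneg_left (hmono hxy) hα0.le
    have h2 : (1 - α) * deriv φ (-y) ≤ (1 - α) * deriv φ (-x) :=
      mul_le_mul_of_nonneg_left (hmono (neg_le_neg hxy)) hα1'.le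
    simp only [g]
    linarith
  -- "inf φ' ≤ 0" and "sup φ' ≥ 0" consequences of φ ≥ 0
  have hinf : ∀ ε > (0:ℝ), ∃ a : ℝ, deriv φ a < ε := by
    intro ε hε
    by_contra h
    push_neg at h
    set v : ℝ := -(φ 0) / ε - 1 with hv
    have hv0 : v < 0 := by
      have : 0 ≤ φ 0 / ε := div_nonneg (hnonneg 0) hε.le
      simp only [hv]; rw [neg_div]; linarith
    obtain ⟨c, _, hc⟩ := exists_deriv_eq_slope φ hv0 (hdiff.continuous.continuousOn)
      (hdiff.differentiableOn.mono (Set.subset_univ _))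
    have hεc : ε ≤ deriv φ c := h c
    have hslope : deriv φ c = (φ 0 - φ v) / (0 - v) := hc
    have hvpos : 0 < 0 - v := by linarith
    have : ε * (0 - v) ≤ φ 0 - φ v := by
      rw [hslope] at hεc
      calc ε * (0 - v) ≤ (φ 0 - φ v) / (0 - v) * (0 - v) := by
            apply mul_le_mul_of_nonneg_right hεc hvpos.le
        _ = φ 0 - φ v := div_mul_cancel₀ _ (ne_of_gt hvpos)
    have hφv := hnonneg v
    have h0v : 0 - v = φ 0 / ε + 1 := by simp only [hv]; ring
    rw [h0v] at this
    have : ε * (φ 0 / ε) + ε ≤ φ 0 - φ v := by linarith [this, mul_add ε (φ 0 / ε) 1]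
    rw [mul_div_cancel₀ _ (ne_of_gt hε)] at this
    linarith
  have hsup : ∀ ε > (0:ℝ), ∃ c : ℝ, -ε < deriv φ c := by
    intro ε hε
    by_contra h
    push_neg at h
    set v : ℝ := φ 0 / ε + 1 with hv
    have hv0 : (0:ℝ) < v := by
      have : 0 ≤ φ 0 / ε := div_nonneg (hnonneg 0) hε.le
      simp only [hv]; linarith
    obtain ⟨c, _, hc⟩ := exists_deriv_eq_slope φ hv0 (hdiff.continuous.continuousOn)
      (hdiff.differentiableOn.mono (Set.subset_univ _))
    have hεc : deriv φ c ≤ -ε := h c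
    rw [hc] at hεc
    have : φ v - φ 0 ≤ -ε * (v - 0) := by
      calc φ v - φ 0 = (φ v - φ 0) / (v - 0) * (v - 0) :=
            (div_mul_cancel₀ _ (by linarith : v - 0 ≠ 0)).symm
        _ ≤ -ε * (v - 0) := mul_le_mul_of_nonneg_right hεc (by linarith)
    have hφv := hnonneg v
    have hve : -ε * (v - 0) = -(φ 0) - ε := by
      simp only [hv]; field_simp; ring
    rw [hve] at this
    linarith
  -- existence of points where g ≤ 0 and g ≥ 0
  have hnc : (∃ b, 0 < deriv φ b) ∨ (∃ b, deriv φ b < 0) := by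
    push_neg at hnotconst
    obtain ⟨w, hw⟩ := hnotconst (deriv φ 0)
    rcases lt_or_gt_of_ne hw with h | h
    · -- deriv φ w < deriv φ 0
      rcases lt_or_ge 0 (deriv φ 0) with h0 | h0
      · exact Or.inl ⟨0, h0⟩
      · exact Or.inr ⟨w, lt_of_lt_of_le h h0⟩
    · rcases lt_or_ge (deriv φ 0) 0 with h0 | h0
      · exact Or.inr ⟨0, h0⟩
      · exact Or.inl ⟨w, lt_of_le_of_lt h0 h⟩
  have key : ∃ vm vp : ℝ, g vm ≤ 0 ∧ 0 ≤ g vp := by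
    rcases hnc with ⟨b, hb⟩ | ⟨b, hb⟩
    · -- 0 < deriv φ b
      obtain ⟨a, ha⟩ := hinf (α * deriv φ b / (1 - α)) (by positivity)
      obtain ⟨a', ha'⟩ := hinf ((1 - α) * deriv φ b / α) (by positivity)
      rw [lt_div_iff₀ hα1'] at ha
      rw [lt_div_iff₀ hα0] at ha'
      refine ⟨min a' (-b), max b (-a), ?_, ?_⟩
      · have h1 : deriv φ (min a' (-b)) ≤ deriv φ a' := hmono (min_le_left _ _)
        have h2 : deriv φ b ≤ deriv φ (-(min a' (-b))) := by
          apply hmono; rw [le_neg]; exact min_le_right _ _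
        simp only [g]
        nlinarith [mul_le_mul_of_nonneg_left h1 hα0.le,
          mul_le_mul_of_nonneg_left h2 hα1'.le]
      · have h1 : deriv φ b ≤ deriv φ (max b (-a)) := hmono (le_max_left _ _)
        have h2 : deriv φ (-(max b (-a))) ≤ deriv φ a := by
          apply hmono; rw [neg_le]; exact le_max_right _ _
        simp only [g]
        nlinarith [mul_le_mul_of_nonneg_left h1 hα0.le,
          mul_le_mul_of_nonneg_left h2 hα1'.le]
    · -- deriv φ b < 0
      obtain ⟨c, hc⟩ := hsup (-(α * deriv φ b) / (1 - α))
        (div_pos (by nlinarith) hα1')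
      obtain ⟨c', hc'⟩ := hsup (-((1 - α) * deriv φ b) / α)
        (div_pos (by nlinarith) hα0)
      rw [neg_div, neg_neg, div_lt_iff₀ hα1'] at hc
      rw [neg_div, neg_neg, div_lt_iff₀ hα0] at hc'
      refine ⟨min b (-c), max c' (-b), ?_, ?_⟩
      · have h1 : deriv φ (min b (-c)) ≤ deriv φ b := hmono (min_le_left _ _)
        have h2 : deriv φ c ≤ deriv φ (-(min b (-c))) := by
          apply hmono; rw [le_neg]; exact min_le_right _ _
        simp only [g]
        nlinarith [mul_le_mul_of_nonneg_left h1 hα0.le,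
          mul_le_mul_of_nonneg_left h2 hα1'.le]
      · have h1 : deriv φ c' ≤ deriv φ (max c' (-b)) := hmono (le_max_left _ _)
        have h2 : deriv φ (-(max c' (-b))) ≤ deriv φ b := by
          apply hmono; rw [neg_le]; exact le_max_right _ _
        simp only [g]
        nlinarith [mul_le_mul_of_nonneg_left h1 hα0.le,
          mul_le_mul_of_nonneg_left h2 hα1'.le]
  obtain ⟨vm, vp, hvm, hvp⟩ := key
  have hgcont : Continuous g := by
    have h1 : Continuous (deriv φ) := hC1.continuous_deriv le_rfl
    exact (continuous_const.mul h1).sub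
      (continuous_const.mul (h1.comp continuous_neg))
  -- IVT gives a zero of g
  have hzero : ∃ v, g v = 0 := by
    have := intermediate_value_uIcc (a := vm) (b := vp) (f := g)
      hgcont.continuousOn
    have h0 : (0:ℝ) ∈ Set.uIcc (g vm) (g vp) := Set.mem_uIcc.2 (Or.inl ⟨hvm, hvp⟩)
    obtain ⟨v, _, hv⟩ := this h0
    exact ⟨v, hv⟩
  constructor
  · obtain ⟨v, hv⟩ := hzero
    exact ⟨v, by rw [show deriv (fun v => α * φ v + (1 - α) * φ (-v)) = g from hDeriv]; exact hv⟩
  · intro vstar hstar v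
    have hgstar : g vstar = 0 := by
      rw [show deriv (fun v => α * φ v + (1 - α) * φ (-v)) = g from hDeriv] at hstar
      exact hstar
    have hDcont : Continuous D := by
      have := hdiff.continuous
      exact (continuous_const.mul this).add
        (continuous_const.mul (this.comp continuous_neg))
    show D vstar ≤ D v
    rcases lt_trichotomy v vstar with h | h | h
    · obtain ⟨c, hcmem, hc⟩ := exists_hasDerivAt_eq_slope D g h
        hDcont.continuousOn (fun x _ => hD x)
      have hgc : g c ≤ 0 := hgstar ▸ hgmono hcmem.2.le
      have hvv : 0 < vstar - v := by linarith
      have : D vstar - D v = g c * (vstar - v) := by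
        rw [hc]; field_simp
      nlinarith
    · rw [h]
    · obtain ⟨c, hcmem, hc⟩ := exists_hasDerivAt_eq_slope D g h
        hDcont.continuousOn (fun x _ => hD x)
      have hgc : 0 ≤ g c := hgstar ▸ hgmono hcmem.1.le
      have hvv : 0 < v - vstar := by linarith
      have : D v - D vstar = g c * (v - vstar) := by
        rw [hc]; field_simp
      nlinarith
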